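/- Let (X, ℬ, μ, T) be a conservative, measure-preserving transformation of a σ-finite measure space, and let f, g ∈ L¹(X, μ) with f > 0 and g > 0 μ-almost everywhere. Then for every measurable T-invariant set A: ∫_A f dμ ≥ ∫_A (limsup_{n→∞} S_n f / S_n g)·g dμ; in particular the function (limsup_{n→∞} S_n f / S_n g)·g belongs to L¹(X, μ). -/

import Mathlib

set_option linter.unusedSectionVars false
set_option linter.unusedVariables false
set_option maxHeartbeats 1000000


open MeasureTheory Filter Topology

/-- `T` is conservative w.r.t. `μ`: every set of positive measure returns to itself. -/
def IsConservative {X : Type*} [MeasurableSpace X] (T : X → X) (μ : Measure X) : Prop :=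
  ∀ A : Set X, MeasurableSet A → 0 < μ A → ∃ n ≥ 1, 0 < μ (A ∩ (T^[n]) ⁻¹' A)

/-- Birkhoff sum `S_n f = ∑_{k<n} f ∘ T^k`. -/
noncomputable def birkhoff {X : Type*} (T : X → X) (f : X → ℝ) (n : ℕ) (x : X) : ℝ :=
  ∑ k ∈ Finset.range n, f (T^[k] x)


/-- The nonnegative part of an extended real, as an extended nonnegative real. -/
noncomputable def erealToENNReal (x : EReal) : ENNReal :=
  if x = ⊤ then ⊤ else ENNReal.ofReal x.toReal


namespace HopfAux

variable {X : Type*} [MeasurableSpace X] {μ : Measure X} {T : X → X}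

lemma birkhoff_zero (φ : X → ℝ) (x : X) : birkhoff T φ 0 x = 0 := by simp [birkhoff]

lemma birkhoff_succ (φ : X → ℝ) (n : ℕ) (x : X) :
    birkhoff T φ (n + 1) x = birkhoff T φ n x + φ (T^[n] x) := Finset.sum_range_succ _ _

lemma birkhoff_succ' (φ : X → ℝ) (n : ℕ) (x : X) :
    birkhoff T φ (n + 1) x = φ x + birkhoff T φ n (T x) := by
  unfold birkhoff
  rw [Finset.sum_range_succ']
  simp [Function.iterate_succ_apply, add_comm]

lemma birkhoff_measurable (hT : Measurable T) {φ : X → ℝ} (hφ : Measurable φ) (n : ℕ) :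
    Measurable (fun x => birkhoff T φ n x) := by
  unfold birkhoff
  exact Finset.measurable_sum _ fun k _ => hφ.comp (hT.iterate k)

lemma birkhoff_integrable (hT : MeasurePreserving T μ μ) {φ : X → ℝ} (hφ : Integrable φ μ)
    (n : ℕ) : Integrable (fun x => birkhoff T φ n x) μ := by
  unfold birkhoff
  refine integrable_finset_sum _ fun k _ => ?_
  have := ((hT.iterate k).integrable_comp hφ.aestronglyMeasurable).mpr hφ
  exact this

lemma birkhoff_nonneg {φ : X → ℝ} (hφ : ∀ x, 0 ≤ φ x) (n : ℕ) (x : X) :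
    0 ≤ birkhoff T φ n x :=
  Finset.sum_nonneg fun k _ => hφ _

lemma birkhoff_pos {φ : X → ℝ} (hφ : ∀ x, 0 < φ x) {n : ℕ} (hn : 1 ≤ n) (x : X) :
    0 < birkhoff T φ n x :=
  Finset.sum_pos (fun k _ => hφ _) (by simp [Finset.nonempty_range_iff]; omega)

lemma birkhoff_mono {φ : X → ℝ} (hφ : ∀ x, 0 ≤ φ x) (x : X) :
    Monotone (fun n => birkhoff T φ n x) :=
  monotone_nat_of_le_succ fun n => by
    rw [birkhoff_succ]; linarith [hφ (T^[n] x)]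

lemma birkhoff_sub (φ ψ : X → ℝ) (c : ℝ) (n : ℕ) (x : X) :
    birkhoff T (fun y => φ y - c * ψ y) n x = birkhoff T φ n x - c * birkhoff T ψ n x := by
  unfold birkhoff
  rw [Finset.mul_sum, ← Finset.sum_sub_distrib]

end HopfAux

namespace HopfAux

variable {X : Type*} [MeasurableSpace X] {μ : Measure X} {T : X → X}

noncomputable def maxB (T : X → X) (φ : X → ℝ) : ℕ → X → ℝ
  | 0 => fun _ => 0
  | N + 1 => fun x => max (birkhoff T φ (N + 1) x) (maxB T φ N x)

lemma maxB_nonneg (φ : X → ℝ) : ∀ N x, 0 ≤ maxB T φ N x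
  | 0, x => le_refl 0
  | N + 1, x => le_trans (maxB_nonneg φ N x) (le_max_right _ _)

lemma maxB_mono (φ : X → ℝ) (x : X) : Monotone fun N => maxB T φ N x :=
  monotone_nat_of_le_succ fun N => le_max_right _ _

lemma birkhoff_le_maxB (φ : X → ℝ) : ∀ N n, n ≤ N → ∀ x, birkhoff T φ n x ≤ maxB T φ N x := by
  intro N
  induction N with
  | zero => intro n hn x; interval_cases n; simp [birkhoff_zero, maxB]
  | succ N ih =>
    intro n hn x
    rcases Nat.lt_or_ge n (N + 1) with h | h
    · exact le_trans (ih n (by omega) x) (le_max_right _ _)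
    · have : n = N + 1 := by omega
      subst this; exact le_max_left _ _

lemma maxB_eq_birkhoff (φ : X → ℝ) :
    ∀ N x, 0 < maxB T φ N x → ∃ n, 1 ≤ n ∧ n ≤ N ∧ maxB T φ N x = birkhoff T φ n x := by
  intro N
  induction N with
  | zero => intro x hx; simp [maxB] at hx
  | succ N ih =>
    intro x hx
    rcases le_total (birkhoff T φ (N + 1) x) (maxB T φ N x) with h | h
    · have hmax : maxB T φ (N + 1) x = maxB T φ N x := max_eq_right h
      rw [hmax] at hx ⊢
      obtain ⟨n, h1, h2, h3⟩ := ih x hx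
      exact ⟨n, h1, by omega, h3⟩
    · exact ⟨N + 1, by omega, le_refl _, max_eq_left h⟩

lemma maxB_measurable (hT : Measurable T) {φ : X → ℝ} (hφ : Measurable φ) (N : ℕ) :
    Measurable (fun x => maxB T φ N x) := by
  induction N with
  | zero => exact measurable_const
  | succ N ih => exact (birkhoff_measurable hT hφ (N + 1)).max ih

lemma maxB_integrable (hT : MeasurePreserving T μ μ) {φ : X → ℝ} (hφ : Integrable φ μ) (N : ℕ) :
    Integrable (fun x => maxB T φ N x) μ := by
  induction N with
  | zero => simpa [maxB] using integrable_const (0 : ℝ)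
  | succ N ih =>
    have := (birkhoff_integrable hT hφ (N + 1)).sup ih
    exact this

/-- Key pointwise inequality: on `{maxB > 0}`, `maxB N x - maxB N (T x) ≤ φ x`. -/
lemma maxB_key (φ : X → ℝ) {N : ℕ} {x : X} (hx : 0 < maxB T φ N x) :
    maxB T φ N x - maxB T φ N (T x) ≤ φ x := by
  obtain ⟨n, h1, h2, h3⟩ := maxB_eq_birkhoff φ N x hx
  obtain ⟨m, rfl⟩ : ∃ m, n = m + 1 := ⟨n - 1, by omega⟩
  rw [h3, birkhoff_succ']
  have := birkhoff_le_maxB (T := T) φ N m (by omega) (T x)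
  linarith

/-- Hopf's maximal ergodic theorem. -/
theorem maximal (hT : MeasurePreserving T μ μ) {φ : X → ℝ} (hφm : Measurable φ)
    (hφi : Integrable φ μ) :
    0 ≤ ∫ x in {x | ∃ n, 1 ≤ n ∧ 0 < birkhoff T φ n x}, φ x ∂μ := by
  have hmaxint := fun N => maxB_integrable hT hφi N
  have hmaxmeas := fun N => maxB_measurable hT.measurable hφm N
  set E : ℕ → Set X := fun N => {x | 0 < maxB T φ N x} with hE
  have hEm : ∀ N, MeasurableSet (E N) := fun N => measurableSet_lt measurable_const (hmaxmeas N)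
  -- step 1: 0 ≤ ∫_{E N} φ
  have hstep : ∀ N, 0 ≤ ∫ x in E N, φ x ∂μ := by
    intro N
    set ψ := fun x => maxB T φ N x - maxB T φ N (T x) with hψ
    have hcomp : Integrable (fun x => maxB T φ N (T x)) μ := by
      have := (hT.integrable_comp (hmaxint N).aestronglyMeasurable).mpr (hmaxint N)
      exact this
    have hψi : Integrable ψ μ := (hmaxint N).sub hcomp
    have hint0 : ∫ x, ψ x ∂μ = 0 := by
      rw [integral_sub (hmaxint N) hcomp]
      have : ∫ x, maxB T φ N (T x) ∂μ = ∫ y, maxB T φ N y ∂μ := by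
        rw [← integral_map hT.measurable.aemeasurable
          (by rw [hT.map_eq]; exact (hmaxmeas N).aestronglyMeasurable), hT.map_eq]
      rw [this, sub_self]
    have hcompl : ∫ x in (E N)ᶜ, ψ x ∂μ ≤ 0 := by
      refine setIntegral_nonpos (hEm N).compl fun x hx => ?_
      have h1 : maxB T φ N x = 0 :=
        le_antisymm (not_lt.mp hx) (maxB_nonneg φ N x)
      have h2 := maxB_nonneg (T := T) φ N (T x)
      simp only [hψ]; linarith
    have hsplit : ∫ x in E N, ψ x ∂μ + ∫ x in (E N)ᶜ, ψ x ∂μ = ∫ x, ψ x ∂μ :=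
      integral_add_compl (hEm N) hψi
    have hEψ : 0 ≤ ∫ x in E N, ψ x ∂μ := by
      rw [hint0] at hsplit; linarith
    refine le_trans hEψ (setIntegral_mono_on hψi.integrableOn hφi.integrableOn (hEm N) ?_)
    intro x hx
    exact maxB_key φ hx
  -- step 2: pass to the union
  have hmono : Monotone E := fun N M hNM x hx => lt_of_lt_of_le hx (maxB_mono φ x hNM)
  have hunion : ⋃ N, E N = {x | ∃ n, 1 ≤ n ∧ 0 < birkhoff T φ n x} := by
    ext x
    simp only [Set.mem_iUnion, Set.mem_setOf_eq, hE]
    constructor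
    · rintro ⟨N, hN⟩
      obtain ⟨n, h1, _, h3⟩ := maxB_eq_birkhoff φ N x hN
      exact ⟨n, h1, h3 ▸ hN⟩
    · rintro ⟨n, h1, h2⟩
      exact ⟨n, lt_of_lt_of_le h2 (birkhoff_le_maxB φ n n le_rfl x)⟩
  rw [← hunion]
  have htendsto := tendsto_setIntegral_of_monotone hEm hmono
    (hφi.integrableOn : IntegrableOn φ (⋃ N, E N) μ)
  exact ge_of_tendsto' htendsto hstep

end HopfAux

namespace HopfAux

variable {X : Type*} [MeasurableSpace X] {μ : Measure X} {T : X → X}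

/-- Points outside the orbit-pullback of a bad set have orbit-stable membership in `B`. -/
lemma orbit_stable {B N : Set X} (hN : symmDiff (T ⁻¹' B) B ⊆ N) {x : X}
    (hx : ∀ k : ℕ, T^[k] x ∉ N) : ∀ k : ℕ, (T^[k] x ∈ B ↔ x ∈ B) := by
  intro k
  induction k with
  | zero => simp
  | succ k ih =>
    have h1 : T^[k] x ∉ symmDiff (T ⁻¹' B) B := fun h => hx k (hN h)
    have h2 : (T^[k] x ∈ T ⁻¹' B) ↔ T^[k] x ∈ B := by
      by_cases h3 : T^[k] x ∈ T ⁻¹' B <;> by_cases h4 : T^[k] x ∈ B <;>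
        simp [h3, h4] at h1 ⊢ <;> simp [Set.mem_symmDiff, h3, h4] at h1
    rw [Function.iterate_succ_apply']
    exact ((Set.mem_preimage).symm.trans h2).trans ih

/-- The Hopf-type inequality on an a.e. invariant set where the ratio exceeds `c`. -/
theorem key_ineq (hT : MeasurePreserving T μ μ) {f₁ g₁ : X → ℝ}
    (hf₁m : Measurable f₁) (hg₁m : Measurable g₁)
    (hf₁i : Integrable f₁ μ) (hg₁i : Integrable g₁ μ)
    {c : ℝ} (hc : 0 ≤ c) {B : Set X} (hBm : MeasurableSet B)
    (hBinv : μ (symmDiff (T ⁻¹' B) B) = 0)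
    (hB : ∀ x ∈ B, ∃ n, 1 ≤ n ∧ c * birkhoff T g₁ n x < birkhoff T f₁ n x) :
    c * ∫ x in B, g₁ x ∂μ ≤ ∫ x in B, f₁ x ∂μ := by
  classical
  set φ := B.indicator (fun x => f₁ x - c * g₁ x) with hφdef
  have hφm : Measurable φ := (hf₁m.sub (measurable_const.mul hg₁m)).indicator hBm
  have hφi : Integrable φ μ := ((hf₁i.sub (hg₁i.const_mul c)).indicator hBm)
  obtain ⟨N, hNsub, hNm, hN0⟩ := exists_measurable_superset_of_null hBinv
  set Bad : Set X := ⋃ k : ℕ, T^[k] ⁻¹' N with hBad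
  have hBadnull : μ Bad = 0 :=
    measure_iUnion_null fun k => by
      rw [(hT.iterate k).measure_preimage hNm.nullMeasurableSet]; exact hN0
  have hgood : ∀ x ∉ Bad, ∀ n : ℕ,
      birkhoff T φ n x = if x ∈ B then birkhoff T f₁ n x - c * birkhoff T g₁ n x else 0 := by
    intro x hx n
    have horb : ∀ k : ℕ, (T^[k] x ∈ B ↔ x ∈ B) :=
      orbit_stable hNsub (by simpa [hBad, Set.mem_iUnion] using hx)
    by_cases hxB : x ∈ B
    · rw [← birkhoff_sub]
      refine if_pos hxB ▸ Finset.sum_congr rfl fun k _ => ?_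
      exact Set.indicator_of_mem ((horb k).mpr hxB) _
    · rw [if_neg hxB]
      refine Finset.sum_eq_zero fun k _ => ?_
      exact Set.indicator_of_notMem (fun h => hxB ((horb k).mp h)) _
  set E := {x | ∃ n, 1 ≤ n ∧ 0 < birkhoff T φ n x} with hE
  have h0 : 0 ≤ ∫ x in E, φ x ∂μ := maximal hT hφm hφi
  have hEB : E =ᵐ[μ] B := by
    have hae : ∀ᵐ x ∂μ, x ∉ Bad := measure_eq_zero_iff_ae_notMem.mp hBadnull
    rw [Filter.eventuallyEq_set]
    filter_upwards [hae] with x hx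
    constructor
    · rintro ⟨n, hn1, hn2⟩
      rw [hgood x hx n] at hn2
      by_contra hxB
      rw [if_neg hxB] at hn2; exact lt_irrefl 0 hn2
    · intro hxB
      obtain ⟨n, hn1, hn2⟩ := hB x hxB
      exact ⟨n, hn1, by rw [hgood x hx n, if_pos hxB]; linarith⟩
  have h1 : ∫ x in E, φ x ∂μ = ∫ x in B, φ x ∂μ := setIntegral_congr_set hEB
  have h2 : ∫ x in B, φ x ∂μ = ∫ x in B, (f₁ x - c * g₁ x) ∂μ := by
    refine setIntegral_congr_fun hBm fun x hx => ?_
    exact Set.indicator_of_mem hx _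
  have h3 : ∫ x in B, (f₁ x - c * g₁ x) ∂μ
      = ∫ x in B, f₁ x ∂μ - c * ∫ x in B, g₁ x ∂μ := by
    rw [integral_sub hf₁i.integrableOn ((hg₁i.const_mul c).integrableOn), integral_const_mul]
  rw [h1, h2, h3] at h0; linarith

/-- Conservativity gives infinitely many returns a.e. -/
theorem ae_infinite_returns (hT : MeasurePreserving T μ μ) (hcons : IsConservative T μ)
    {B : Set X} (hBm : MeasurableSet B) :
    ∀ᵐ x ∂μ, x ∈ B → {n : ℕ | T^[n] x ∈ B}.Infinite := by
  classical
  set W := B ∩ ⋂ n : ℕ, ⋂ _ : 1 ≤ n, T^[n] ⁻¹' Bᶜ with hW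
  have hWm : MeasurableSet W := by
    refine hBm.inter (MeasurableSet.iInter fun n => MeasurableSet.iInter fun hn => ?_)
    exact ((hT.iterate n).measurable) hBm.compl
  have hW0 : μ W = 0 := by
    by_contra h
    obtain ⟨n, hn1, hn2⟩ := hcons W hWm (pos_iff_ne_zero.mpr h)
    have : W ∩ T^[n] ⁻¹' W = ∅ := by
      ext x
      simp only [Set.mem_inter_iff, Set.mem_empty_iff_false, iff_false, not_and]
      intro hxW hxn
      have h1 : T^[n] x ∈ Bᶜ := by
        have := hxW.2
        simp only [Set.mem_iInter] at this
        exact this n hn1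
      exact h1 hxn.1
    rw [this] at hn2; simp at hn2
  have hBadnull : μ (⋃ m : ℕ, T^[m] ⁻¹' W) = 0 :=
    measure_iUnion_null fun m => by
      rw [(hT.iterate m).measure_preimage hWm.nullMeasurableSet]; exact hW0
  have hae : ∀ᵐ x ∂μ, x ∉ ⋃ m : ℕ, T^[m] ⁻¹' W := measure_eq_zero_iff_ae_notMem.mp hBadnull
  filter_upwards [hae] with x hx hxB
  intro hfin
  have hne : ({n : ℕ | T^[n] x ∈ B}).Nonempty := ⟨0, by simpa using hxB⟩
  set m := hfin.toFinset.max' (by simpa [Set.Finite.toFinset] using hne) with hm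
  have hmmem : T^[m] x ∈ B := by
    have := hfin.toFinset.max'_mem (by simpa using hne)
    simpa using this
  have hmW : T^[m] x ∈ W := by
    refine ⟨hmmem, ?_⟩
    simp only [Set.mem_iInter]
    intro n hn
    intro hcontra
    have hmem : n + m ∈ hfin.toFinset := by
      simp only [Set.Finite.mem_toFinset, Set.mem_setOf_eq]
      rw [Function.iterate_add_apply]; exact hcontra
    have := hfin.toFinset.le_max' _ hmem
    omega
  exact hx (Set.mem_iUnion.mpr ⟨m, hmW⟩)

/-- Birkhoff sums of a positive function tend to infinity a.e. -/
theorem birkhoff_tendsto_atTop (hT : MeasurePreserving T μ μ) (hcons : IsConservative T μ)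
    {g₁ : X → ℝ} (hg₁m : Measurable g₁) (hpos : ∀ x, 0 < g₁ x) :
    ∀ᵐ x ∂μ, Tendsto (fun n => birkhoff T g₁ n x) atTop atTop := by
  have hae : ∀ᵐ x ∂μ, ∀ m : ℕ, x ∈ {y | 1 / (m + 1 : ℝ) ≤ g₁ y} →
      {n : ℕ | T^[n] x ∈ {y | 1 / (m + 1 : ℝ) ≤ g₁ y}}.Infinite := by
    rw [ae_all_iff]
    intro m
    exact ae_infinite_returns hT hcons (measurableSet_le measurable_const hg₁m)
  filter_upwards [hae] with x hx
  obtain ⟨m, hm⟩ := exists_nat_one_div_lt (hpos x)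
  have hinf := hx m (le_of_lt hm)
  apply tendsto_atTop_atTop_of_monotone (birkhoff_mono (fun y => (hpos y).le) x)
  intro C
  set K := Nat.ceil (C * (m + 1 : ℝ)) + 1 with hK
  obtain ⟨t, htsub, htcard⟩ := hinf.exists_subset_card_eq K
  have htne : t.Nonempty := Finset.card_pos.mp (by omega)
  refine ⟨t.max' htne + 1, ?_⟩
  have hsub : t ⊆ Finset.range (t.max' htne + 1) := fun k hk =>
    Finset.mem_range.mpr (by have := t.le_max' k hk; omega)
  have h1 : ∑ k ∈ t, g₁ (T^[k] x) ≤ birkhoff T g₁ (t.max' htne + 1) x := by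
    unfold birkhoff
    exact Finset.sum_le_sum_of_subset_of_nonneg hsub fun k _ _ => (hpos _).le
  have h2 : (K : ℝ) * (1 / (m + 1 : ℝ)) ≤ ∑ k ∈ t, g₁ (T^[k] x) := by
    rw [← htcard, Finset.card_eq_sum_ones, Nat.cast_sum, Finset.sum_mul]
    refine Finset.sum_le_sum fun k hk => ?_
    have := htsub hk
    simpa using this
  have h3 : C ≤ (K : ℝ) * (1 / (m + 1 : ℝ)) := by
    have hceil : C * (m + 1 : ℝ) ≤ (K : ℝ) := by
      have := Nat.le_ceil (C * (m + 1 : ℝ))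
      push_cast [hK]
      push_cast at this
      linarith
    have hm1 : (0 : ℝ) < m + 1 := by positivity
    rw [mul_one_div, le_div_iff₀ hm1]
    linarith
  linarith

end HopfAux

namespace HopfAux

variable {X : Type*} [MeasurableSpace X] {μ : Measure X} {T : X → X}

lemma erealToENNReal_measurable : Measurable erealToENNReal := by
  unfold erealToENNReal
  exact Measurable.ite (MeasurableSet.singleton ⊤ : MeasurableSet {x : EReal | x = ⊤})
    measurable_const (ENNReal.measurable_ofReal.comp measurable_ereal_toReal)

lemma erealToENNReal_le_ofReal {x : EReal} {r : ℝ} (h : x ≤ (r : EReal)) :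
    erealToENNReal x ≤ ENNReal.ofReal r := by
  unfold erealToENNReal
  have hx : x ≠ ⊤ := fun hc => by
    rw [hc] at h; exact absurd h (by simp)
  rw [if_neg hx]
  induction x using EReal.rec with
  | bot => simp
  | coe y =>
    exact ENNReal.ofReal_le_ofReal (by exact_mod_cast h)
  | top => exact absurd rfl hx

/-- Core comparison lemma for EReal limsups of nonnegative real sequences. -/
lemma ereal_limsup_le {u v : ℕ → ℝ} (hv : ∀ n, 0 ≤ v n)
    (h : ∀ ε : ℝ, 0 < ε → ∀ᶠ n in atTop, u n ≤ v n * (1 + ε) + ε) :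
    limsup (fun n => ((u n : ℝ) : EReal)) atTop ≤ limsup (fun n => ((v n : ℝ) : EReal)) atTop := by
  set L := limsup (fun n => ((v n : ℝ) : EReal)) atTop with hL
  rcases eq_or_ne L ⊤ with htop | htop
  · rw [htop]; exact le_top
  by_contra hcon
  push_neg at hcon
  obtain ⟨d, hLd, hdu⟩ := EReal.exists_between_coe_real hcon
  have hfreq : ∃ᶠ n in atTop, (d : EReal) < ((u n : ℝ) : EReal) :=
    frequently_lt_of_lt_limsup (by isBoundedDefault) hdu
  have hL0 : (0 : EReal) ≤ L := by
    refine le_limsup_of_frequently_le (Frequently.of_forall fun n => ?_) (by isBoundedDefault)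
    exact_mod_cast hv n
  obtain ⟨d', hLd', hd'd⟩ := EReal.exists_between_coe_real hLd
  have hd'0 : (0 : ℝ) ≤ d' := by
    have : (0 : EReal) < (d' : EReal) := lt_of_le_of_lt hL0 hLd'
    exact_mod_cast this.le
  have hdd' : d' < d := by exact_mod_cast hd'd
  set ε := (d - d') / (d' + 2) with hε
  have hεpos : 0 < ε := div_pos (by linarith) (by linarith)
  have hev : ∀ᶠ n in atTop, v n < d' := by
    have := eventually_lt_of_limsup_lt hLd' (by isBoundedDefault)
    filter_upwards [this] with n hn
    exact_mod_cast hn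
  obtain ⟨n, hn1, hn2, hn3⟩ := (hfreq.and_eventually ((h ε hεpos).and hev)).exists
  have hdun : d < u n := by exact_mod_cast hn1
  have hbound : u n ≤ d' * (1 + ε) + ε := by
    have := mul_le_mul_of_nonneg_right hn3.le (by linarith : (0:ℝ) ≤ 1 + ε)
    linarith
  have hεeq : ε * (d' + 2) = d - d' := div_mul_cancel₀ _ (by linarith)
  nlinarith

lemma limsup_ratio_shift {a b : ℝ} (ha : 0 ≤ a) (hb : 0 ≤ b) {t s : ℕ → ℝ}
    (ht : ∀ n, 0 ≤ t n) (hs0 : ∀ n, 0 ≤ s n) (hs : Tendsto s atTop atTop) :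
    limsup (fun n => (((a + t n) / (b + s n) : ℝ) : EReal)) atTop
      = limsup (fun n => ((t n / s n : ℝ) : EReal)) atTop := by
  apply le_antisymm
  · apply ereal_limsup_le (fun n => div_nonneg (ht n) (hs0 n))
    intro ε hε
    filter_upwards [hs.eventually_ge_atTop (max (a / ε) 1)] with n hn
    have hsn1 : (1 : ℝ) ≤ s n := le_trans (le_max_right _ _) hn
    have hsnpos : (0 : ℝ) < s n := by linarith
    have h1 : (a + t n) / (b + s n) ≤ (a + t n) / s n :=
      div_le_div_of_nonneg_left (by linarith [ht n]) hsnpos (by linarith)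
    have h2 : (a + t n) / s n = a / s n + t n / s n := add_div _ _ _
    have h3 : a / s n ≤ ε := by
      rw [div_le_iff₀ hsnpos]
      have h4 : a / ε ≤ s n := le_trans (le_max_left _ _) hn
      calc a = ε * (a / ε) := by field_simp
        _ ≤ ε * s n := by nlinarith
    have h5 : 0 ≤ t n / s n := div_nonneg (ht n) hsnpos.le
    nlinarith [h1, h2, h3, h5]
  · apply ereal_limsup_le
      (fun n => div_nonneg (by linarith [ht n]) (by linarith [hs0 n]))
    intro ε hε
    filter_upwards [hs.eventually_ge_atTop (max (b / ε) 1)] with n hn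
    have hsn1 : (1 : ℝ) ≤ s n := le_trans (le_max_right _ _) hn
    have hsnpos : (0 : ℝ) < s n := by linarith
    have hbs : (0 : ℝ) < b + s n := by linarith
    have h1 : t n / s n ≤ (a + t n) / s n := by gcongr; linarith
    have h2 : b ≤ ε * s n := by
      have h4 : b / ε ≤ s n := le_trans (le_max_left _ _) hn
      calc b = ε * (b / ε) := by field_simp
        _ ≤ ε * s n := by nlinarith
    have h3 : (a + t n) / s n ≤ (a + t n) / (b + s n) * (1 + ε) := by
      rw [div_mul_eq_mul_div, div_le_div_iff₀ hsnpos hbs]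
      nlinarith [ht n]
    have h5 : 0 ≤ (a + t n) / (b + s n) := div_nonneg (by linarith [ht n]) hbs.le
    nlinarith [h1, h3, h5]

end HopfAux

namespace HopfAux

variable {X : Type*} [MeasurableSpace X] {μ : Measure X} {T : X → X}

lemma limsup_invariant_at {f₁ g₁ : X → ℝ} (hf : ∀ x, 0 < f₁ x) (hg : ∀ x, 0 < g₁ x) {x : X}
    (hx : Tendsto (fun n => birkhoff T g₁ n (T x)) atTop atTop) :
    limsup (fun n => ((birkhoff T f₁ n (T x) / birkhoff T g₁ n (T x) : ℝ) : EReal)) atTop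
      = limsup (fun n => ((birkhoff T f₁ n x / birkhoff T g₁ n x : ℝ) : EReal)) atTop := by
  have hshift :
      limsup (fun n => ((birkhoff T f₁ n x / birkhoff T g₁ n x : ℝ) : EReal)) atTop
        = limsup (fun n => ((birkhoff T f₁ (n + 1) x / birkhoff T g₁ (n + 1) x : ℝ) : EReal))
            atTop :=
    (limsup_nat_add (fun n => ((birkhoff T f₁ n x / birkhoff T g₁ n x : ℝ) : EReal)) 1).symm
  rw [hshift]
  have heq : (fun n => ((birkhoff T f₁ (n + 1) x / birkhoff T g₁ (n + 1) x : ℝ) : EReal))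
      = fun n => (((f₁ x + birkhoff T f₁ n (T x)) / (g₁ x + birkhoff T g₁ n (T x)) : ℝ) : EReal) := by
    funext n; rw [birkhoff_succ', birkhoff_succ']
  rw [heq]
  exact (limsup_ratio_shift (hf x).le (hg x).le
    (fun n => birkhoff_nonneg (fun y => (hf y).le) n (T x))
    (fun n => birkhoff_nonneg (fun y => (hg y).le) n (T x)) hx).symm

end HopfAux

open HopfAux

/-- For `f, g ∈ L¹` positive a.e.: `∫_A f ≥ ∫_A (limsup Sₙf/Sₙg)·g` for every invariant
set `A`; in particular `(limsup Sₙf/Sₙg)·g` is integrable. -/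
theorem integral_limsup_le {X : Type*} [MeasurableSpace X] (μ : Measure X) [SigmaFinite μ]
    (T : X → X) (hT : MeasurePreserving T μ μ) (hcons : IsConservative T μ)
    (f g : X → ℝ) (hf : Integrable f μ) (hg : Integrable g μ)
    (hfpos : ∀ᵐ x ∂μ, 0 < f x) (hgpos : ∀ᵐ x ∂μ, 0 < g x) :
    (∀ A : Set X, MeasurableSet A → T ⁻¹' A = A →
      ∫⁻ x in A,
          erealToENNReal
            (limsup (fun n => ((birkhoff T f n x / birkhoff T g n x : ℝ) : EReal)) atTop)
          * ENNReal.ofReal (g x) ∂μ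
        ≤ ∫⁻ x in A, ENNReal.ofReal (f x) ∂μ) ∧
    ∫⁻ x,
        erealToENNReal
          (limsup (fun n => ((birkhoff T f n x / birkhoff T g n x : ℝ) : EReal)) atTop)
        * ENNReal.ofReal (g x) ∂μ < ⊤ := by
  classical
  obtain ⟨f', hf'm, hf'ae⟩ : ∃ f', Measurable f' ∧ f =ᵐ[μ] f' :=
    ⟨hf.1.mk f, hf.1.stronglyMeasurable_mk.measurable, hf.1.ae_eq_mk⟩
  obtain ⟨g', hg'm, hg'ae⟩ : ∃ g', Measurable g' ∧ g =ᵐ[μ] g' :=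
    ⟨hg.1.mk g, hg.1.stronglyMeasurable_mk.measurable, hg.1.ae_eq_mk⟩
  set f₁ := fun x => if 0 < f' x then f' x else 1 with hf₁def
  set g₁ := fun x => if 0 < g' x then g' x else 1 with hg₁def
  have hf₁m : Measurable f₁ :=
    Measurable.ite (measurableSet_lt measurable_const hf'm) hf'm measurable_const
  have hg₁m : Measurable g₁ :=
    Measurable.ite (measurableSet_lt measurable_const hg'm) hg'm measurable_const
  have hf₁pos : ∀ x, 0 < f₁ x := fun x => by
    by_cases h : 0 < f' x <;> simp [hf₁def, h]
  have hg₁pos : ∀ x, 0 < g₁ x := fun x => by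
    by_cases h : 0 < g' x <;> simp [hg₁def, h]
  have hf₁ae : f =ᵐ[μ] f₁ := by
    filter_upwards [hf'ae, hfpos] with x h1 h2
    simp [hf₁def, ← h1, h2]
  have hg₁ae : g =ᵐ[μ] g₁ := by
    filter_upwards [hg'ae, hgpos] with x h1 h2
    simp [hg₁def, ← h1, h2]
  have hf₁i : Integrable f₁ μ := hf.congr hf₁ae
  have hg₁i : Integrable g₁ μ := hg.congr hg₁ae
  -- a.e. equality of all Birkhoff sums
  have hffg : μ {x | ¬(f x = f₁ x ∧ g x = g₁ x)} = 0 := by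
    have : ∀ᵐ x ∂μ, f x = f₁ x ∧ g x = g₁ x := hf₁ae.and hg₁ae
    exact ae_iff.mp this
  obtain ⟨N₀, hN₀sub, hN₀m, hN₀0⟩ := exists_measurable_superset_of_null hffg
  have hbadnull : μ (⋃ k : ℕ, T^[k] ⁻¹' N₀) = 0 :=
    measure_iUnion_null fun k => by
      rw [(hT.iterate k).measure_preimage hN₀m.nullMeasurableSet]; exact hN₀0
  have horb : ∀ᵐ x ∂μ, ∀ n : ℕ,
      birkhoff T f n x = birkhoff T f₁ n x ∧ birkhoff T g n x = birkhoff T g₁ n x := by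
    filter_upwards [measure_eq_zero_iff_ae_notMem.mp hbadnull] with x hx n
    have hk : ∀ k : ℕ, f (T^[k] x) = f₁ (T^[k] x) ∧ g (T^[k] x) = g₁ (T^[k] x) := by
      intro k
      have h1 : T^[k] x ∉ N₀ := fun h => hx (Set.mem_iUnion.mpr ⟨k, h⟩)
      have h2 : T^[k] x ∉ {y | ¬(f y = f₁ y ∧ g y = g₁ y)} := fun h => h1 (hN₀sub h)
      simpa [Set.mem_setOf_eq, not_not] using h2
    exact ⟨Finset.sum_congr rfl fun k _ => (hk k).1, Finset.sum_congr rfl fun k _ => (hk k).2⟩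
  set h₁ := fun x =>
    limsup (fun n => ((birkhoff T f₁ n x / birkhoff T g₁ n x : ℝ) : EReal)) atTop with hh₁def
  have hh₁m : Measurable h₁ := by
    have heq : h₁ = fun x => ⨅ n, ⨆ i, ⨆ _ : i ≥ n,
        ((birkhoff T f₁ i x / birkhoff T g₁ i x : ℝ) : EReal) := by
      funext x; exact limsup_eq_iInf_iSup_of_nat
    rw [heq]
    refine Measurable.iInf fun n => Measurable.iSup fun i => Measurable.iSup fun _ => ?_
    exact measurable_coe_real_ereal.comp
      ((birkhoff_measurable hT.measurable hf₁m i).div (birkhoff_measurable hT.measurable hg₁m i))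
  set F := fun x => erealToENNReal (h₁ x) * ENNReal.ofReal (g₁ x) with hFdef
  have haeF : ∀ᵐ x ∂μ,
      erealToENNReal
          (limsup (fun n => ((birkhoff T f n x / birkhoff T g n x : ℝ) : EReal)) atTop)
        * ENNReal.ofReal (g x) = F x := by
    filter_upwards [horb, hg₁ae] with x hx hgx
    have hlam : (fun n => ((birkhoff T f n x / birkhoff T g n x : ℝ) : EReal))
        = fun n => ((birkhoff T f₁ n x / birkhoff T g₁ n x : ℝ) : EReal) := by
      funext n; rw [(hx n).1, (hx n).2]
    rw [hlam, hgx]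
  -- a.e. invariance of h₁
  have htend := birkhoff_tendsto_atTop hT hcons hg₁m hg₁pos
  have hTtend : ∀ᵐ x ∂μ, Tendsto (fun n => birkhoff T g₁ n (T x)) atTop atTop :=
    hT.quasiMeasurePreserving.ae htend
  have hinv : ∀ᵐ x ∂μ, h₁ (T x) = h₁ x := by
    filter_upwards [hTtend] with x hx
    exact limsup_invariant_at hf₁pos hg₁pos hx
  obtain ⟨Z, hZsub, hZm, hZ0⟩ := exists_measurable_superset_of_null (ae_iff.mp hinv)
  have hslice : ∀ A : Set X, T ⁻¹' A = A → ∀ S : Set EReal,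
      μ (symmDiff (T ⁻¹' (A ∩ h₁ ⁻¹' S)) (A ∩ h₁ ⁻¹' S)) = 0 := by
    intro A hAinv S
    refine measure_mono_null (fun x hx => hZsub ?_) hZ0
    simp only [Set.mem_setOf_eq]
    intro heq
    have h1 : T x ∈ A ↔ x ∈ A := by rw [← Set.mem_preimage, hAinv]
    have h2 : h₁ (T x) ∈ S ↔ h₁ x ∈ S := by rw [heq]
    rw [Set.mem_symmDiff] at hx
    simp only [Set.mem_preimage, Set.mem_inter_iff] at hx
    rcases hx with ⟨⟨ha, hb⟩, hc⟩ | ⟨⟨ha, hb⟩, hc⟩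
    · exact hc ⟨h1.mp ha, h2.mp hb⟩
    · exact hc ⟨h1.mpr ha, h2.mpr hb⟩
  have hexists : ∀ (c : ℝ) (x : X), (c : EReal) < h₁ x →
      ∃ n, 1 ≤ n ∧ c * birkhoff T g₁ n x < birkhoff T f₁ n x := by
    intro c x hx
    have hfreq : ∃ᶠ n in atTop,
        (c : EReal) < ((birkhoff T f₁ n x / birkhoff T g₁ n x : ℝ) : EReal) :=
      frequently_lt_of_lt_limsup (by isBoundedDefault) hx
    obtain ⟨n, hcn, hn1⟩ := (hfreq.and_eventually (eventually_ge_atTop 1)).exists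
    have hratio : c < birkhoff T f₁ n x / birkhoff T g₁ n x := EReal.coe_lt_coe_iff.mp hcn
    have hgposn : 0 < birkhoff T g₁ n x := birkhoff_pos hg₁pos hn1 x
    refine ⟨n, hn1, ?_⟩
    rw [lt_div_iff₀ hgposn] at hratio
    linarith
  -- the set where h₁ = ⊤ is null
  have htopm : MeasurableSet (h₁ ⁻¹' {⊤}) := hh₁m (MeasurableSet.singleton ⊤)
  have htopnull : μ (h₁ ⁻¹' {⊤}) = 0 := by
    by_contra hne
    set B := h₁ ⁻¹' {⊤} with hBdef
    have hBsymm : μ (symmDiff (T ⁻¹' B) B) = 0 := by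
      have := hslice Set.univ (by simp) {⊤}
      simpa [hBdef] using this
    have hkey : ∀ c : ℝ, 0 ≤ c → c * ∫ x in B, g₁ x ∂μ ≤ ∫ x in B, f₁ x ∂μ := fun c hc =>
      key_ineq hT hf₁m hg₁m hf₁i hg₁i hc htopm hBsymm
        (fun x hx => hexists c x (by rw [show h₁ x = ⊤ from hx]; exact EReal.coe_lt_top c))
    have hgBpos : 0 < ∫ x in B, g₁ x ∂μ := by
      rw [setIntegral_pos_iff_support_of_nonneg_ae
        (ae_restrict_of_ae (Filter.Eventually.of_forall fun x => (hg₁pos x).le))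
        hg₁i.integrableOn]
      have hsupp : Function.support g₁ = Set.univ :=
        Set.eq_univ_of_forall fun x => (hg₁pos x).ne'
      rw [hsupp, Set.univ_inter]
      exact pos_iff_ne_zero.mpr hne
    set Ig := ∫ x in B, g₁ x ∂μ with hIg
    set If := ∫ x in B, f₁ x ∂μ with hIf
    have hIfnn : 0 ≤ If := setIntegral_nonneg htopm fun x _ => (hf₁pos x).le
    have hc := hkey (If / Ig + 1) (by positivity)
    rw [add_mul, div_mul_cancel₀ _ hgBpos.ne', one_mul] at hc
    linarith
  -- integral of g₁
  have hgint : ENNReal.ofReal (∫ x, g₁ x ∂μ) = ∫⁻ x, ENNReal.ofReal (g₁ x) ∂μ :=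
    ofReal_integral_eq_lintegral_ofReal hg₁i (Filter.Eventually.of_forall fun x => (hg₁pos x).le)
  set C := ∫⁻ x, ENNReal.ofReal (g₁ x) ∂μ with hCdef
  have hClt : C < ⊤ := by rw [← hgint]; exact ENNReal.ofReal_lt_top
  -- the main estimate
  have main : ∀ A : Set X, MeasurableSet A → T ⁻¹' A = A →
      ∫⁻ x in A, F x ∂μ ≤ ∫⁻ x in A, ENNReal.ofReal (f₁ x) ∂μ := by
    intro A hAm hAinv
    refine ENNReal.le_of_forall_pos_le_add fun δ hδ _ => ?_
    set ε := (δ : ℝ) / (C.toReal + 1) with hεdef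
    have hCt : (0:ℝ) ≤ C.toReal := ENNReal.toReal_nonneg
    have hδpos : (0:ℝ) < δ := hδ
    have hεpos : 0 < ε := div_pos hδpos (by linarith)
    set Bset : ℕ → Set X := fun j =>
      A ∩ h₁ ⁻¹' Set.Ioc (((j : ℝ) * ε : ℝ) : EReal) ((((j : ℝ) + 1) * ε : ℝ) : EReal)
      with hBsetdef
    have hBm : ∀ j, MeasurableSet (Bset j) := fun j => hAm.inter (hh₁m measurableSet_Ioc)
    have hBdisj : Pairwise (Function.onFun Disjoint Bset) := by
      intro i j hij
      rw [Function.onFun, Set.disjoint_left]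
      rintro x ⟨-, hxi⟩ ⟨-, hxj⟩
      simp only [Set.mem_preimage, Set.mem_Ioc] at hxi hxj
      rcases hij.lt_or_gt with h | h
      · have hre : (((i:ℝ) + 1) * ε : ℝ) ≤ ((j:ℝ) * ε : ℝ) := by
          have : ((i:ℝ) + 1) ≤ (j:ℝ) := by exact_mod_cast h
          nlinarith
        have hle : ((((i:ℝ) + 1) * ε : ℝ) : EReal) ≤ (((j:ℝ) * ε : ℝ) : EReal) := by
          exact_mod_cast hre
        exact absurd ((hxi.2.trans hle).trans_lt hxj.1) (lt_irrefl _)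
      · have hre : (((j:ℝ) + 1) * ε : ℝ) ≤ ((i:ℝ) * ε : ℝ) := by
          have : ((j:ℝ) + 1) ≤ (i:ℝ) := by exact_mod_cast h
          nlinarith
        have hle : ((((j:ℝ) + 1) * ε : ℝ) : EReal) ≤ (((i:ℝ) * ε : ℝ) : EReal) := by
          exact_mod_cast hre
        exact absurd ((hxj.2.trans hle).trans_lt hxi.1) (lt_irrefl _)
    have hperslice : ∀ j : ℕ, ∫⁻ x in Bset j, F x ∂μ
        ≤ ∫⁻ x in Bset j, ENNReal.ofReal (f₁ x) ∂μ
          + ENNReal.ofReal ε * ∫⁻ x in Bset j, ENNReal.ofReal (g₁ x) ∂μ := by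
      intro j
      have hcnn : (0:ℝ) ≤ (j:ℝ) * ε := by positivity
      have hkeyj : ((j:ℝ) * ε) * ∫ x in Bset j, g₁ x ∂μ ≤ ∫ x in Bset j, f₁ x ∂μ :=
        key_ineq hT hf₁m hg₁m hf₁i hg₁i hcnn (hBm j) (hslice A hAinv _)
          (fun x hx => hexists _ x hx.2.1)
      have hg1 : ENNReal.ofReal (∫ x in Bset j, g₁ x ∂μ)
          = ∫⁻ x in Bset j, ENNReal.ofReal (g₁ x) ∂μ :=
        ofReal_integral_eq_lintegral_ofReal hg₁i.integrableOn
          (ae_restrict_of_ae (Filter.Eventually.of_forall fun x => (hg₁pos x).le))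
      have hf1 : ENNReal.ofReal (∫ x in Bset j, f₁ x ∂μ)
          = ∫⁻ x in Bset j, ENNReal.ofReal (f₁ x) ∂μ :=
        ofReal_integral_eq_lintegral_ofReal hf₁i.integrableOn
          (ae_restrict_of_ae (Filter.Eventually.of_forall fun x => (hf₁pos x).le))
      have hstep1 : ENNReal.ofReal ((j:ℝ) * ε) * (∫⁻ x in Bset j, ENNReal.ofReal (g₁ x) ∂μ)
          ≤ ∫⁻ x in Bset j, ENNReal.ofReal (f₁ x) ∂μ := by
        rw [← hg1, ← ENNReal.ofReal_mul hcnn, ← hf1]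
        exact ENNReal.ofReal_le_ofReal hkeyj
      calc ∫⁻ x in Bset j, F x ∂μ
          ≤ ∫⁻ x in Bset j, ENNReal.ofReal (((j:ℝ) + 1) * ε) * ENNReal.ofReal (g₁ x) ∂μ := by
            refine setLIntegral_mono
              (measurable_const.mul (ENNReal.measurable_ofReal.comp hg₁m)) fun x hx => ?_
            exact mul_le_mul_left (erealToENNReal_le_ofReal hx.2.2) _
        _ = ENNReal.ofReal (((j:ℝ) + 1) * ε) * ∫⁻ x in Bset j, ENNReal.ofReal (g₁ x) ∂μ :=
            lintegral_const_mul _ (ENNReal.measurable_ofReal.comp hg₁m)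
        _ = (ENNReal.ofReal ((j:ℝ) * ε) + ENNReal.ofReal ε)
              * ∫⁻ x in Bset j, ENNReal.ofReal (g₁ x) ∂μ := by
            rw [← ENNReal.ofReal_add hcnn hεpos.le,
              show ((j:ℝ) + 1) * ε = (j:ℝ) * ε + ε by ring]
        _ = ENNReal.ofReal ((j:ℝ) * ε) * (∫⁻ x in Bset j, ENNReal.ofReal (g₁ x) ∂μ)
              + ENNReal.ofReal ε * ∫⁻ x in Bset j, ENNReal.ofReal (g₁ x) ∂μ := add_mul _ _ _
        _ ≤ _ := add_le_add_left hstep1 _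
    have hS0m : MeasurableSet (A ∩ h₁ ⁻¹' Set.Iic (0 : EReal)) :=
      hAm.inter (hh₁m measurableSet_Iic)
    have hS0 : ∫⁻ x in A ∩ h₁ ⁻¹' Set.Iic (0 : EReal), F x ∂μ = 0 := by
      have hzero : ∀ x ∈ A ∩ h₁ ⁻¹' Set.Iic (0 : EReal), F x = 0 := by
        intro x hx
        have h1 : erealToENNReal (h₁ x) ≤ ENNReal.ofReal 0 :=
          erealToENNReal_le_ofReal (by exact_mod_cast hx.2)
        simp only [ENNReal.ofReal_zero, le_zero_iff] at h1
        simp [hFdef, h1]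
      calc ∫⁻ x in A ∩ h₁ ⁻¹' Set.Iic (0 : EReal), F x ∂μ
          = ∫⁻ _ in A ∩ h₁ ⁻¹' Set.Iic (0 : EReal), 0 ∂μ :=
            setLIntegral_congr_fun hS0m hzero
        _ = 0 := lintegral_zero
    have hStop : ∫⁻ x in A ∩ h₁ ⁻¹' {⊤}, F x ∂μ = 0 := by
      have hnull : μ (A ∩ h₁ ⁻¹' {⊤}) = 0 :=
        measure_mono_null Set.inter_subset_right htopnull
      rw [Measure.restrict_eq_zero.mpr hnull, lintegral_zero_measure]
    have hAsub : A ⊆ (A ∩ h₁ ⁻¹' Set.Iic (0 : EReal) ∪ A ∩ h₁ ⁻¹' {⊤}) ∪ ⋃ j, Bset j := by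
      intro x hxA
      by_cases h0 : h₁ x ≤ 0
      · exact Or.inl (Or.inl ⟨hxA, h0⟩)
      by_cases htp : h₁ x = ⊤
      · exact Or.inl (Or.inr ⟨hxA, htp⟩)
      have hbot : h₁ x ≠ ⊥ := fun hb => h0 (hb ▸ bot_le)
      obtain ⟨r, hr⟩ : ∃ r : ℝ, h₁ x = (r : EReal) :=
        ⟨(h₁ x).toReal, (EReal.coe_toReal htp hbot).symm⟩
      have hrpos : (0:ℝ) < r := by
        have h2 : (0 : EReal) < (r : EReal) := hr ▸ lt_of_not_ge h0
        exact_mod_cast h2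
      have hj : ∃ j : ℕ, (j:ℝ) * ε < r ∧ r ≤ ((j:ℝ) + 1) * ε := by
        set k := Nat.ceil (r / ε) with hk
        have hk1 : 1 ≤ k := Nat.one_le_ceil_iff.mpr (div_pos hrpos hεpos)
        refine ⟨k - 1, ?_, ?_⟩
        · have hlt : ((k - 1 : ℕ) : ℝ) < r / ε := Nat.lt_ceil.mp (by omega)
          calc ((k - 1 : ℕ) : ℝ) * ε < (r / ε) * ε := by nlinarith
            _ = r := by field_simp
        · have hle : r / ε ≤ (k : ℝ) := Nat.le_ceil _
          have hcast : ((k - 1 : ℕ) : ℝ) + 1 = (k : ℝ) := by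
            rw [Nat.cast_sub hk1]; ring
          rw [hcast]
          calc r = (r / ε) * ε := by field_simp
            _ ≤ (k : ℝ) * ε := by nlinarith
      obtain ⟨j, hj1, hj2⟩ := hj
      refine Or.inr (Set.mem_iUnion.mpr ⟨j, hxA, ?_⟩)
      rw [Set.mem_preimage, hr, Set.mem_Ioc]
      exact ⟨by exact_mod_cast hj1, by exact_mod_cast hj2⟩
    have hεC : ENNReal.ofReal ε * C ≤ (δ : ENNReal) := by
      have hreal : ε * C.toReal ≤ (δ : ℝ) := by
        rw [hεdef, div_mul_eq_mul_div, div_le_iff₀ (by linarith)]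
        nlinarith
      calc ENNReal.ofReal ε * C = ENNReal.ofReal ε * ENNReal.ofReal C.toReal := by
            rw [ENNReal.ofReal_toReal hClt.ne]
        _ = ENNReal.ofReal (ε * C.toReal) := (ENNReal.ofReal_mul hεpos.le).symm
        _ ≤ ENNReal.ofReal (δ : ℝ) := ENNReal.ofReal_le_ofReal hreal
        _ = (δ : ENNReal) := ENNReal.ofReal_coe_nnreal
    calc ∫⁻ x in A, F x ∂μ
        ≤ ∫⁻ x in (A ∩ h₁ ⁻¹' Set.Iic (0 : EReal) ∪ A ∩ h₁ ⁻¹' {⊤}) ∪ ⋃ j, Bset j, F x ∂μ :=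
          lintegral_mono_set hAsub
      _ ≤ (∫⁻ x in A ∩ h₁ ⁻¹' Set.Iic (0 : EReal) ∪ A ∩ h₁ ⁻¹' {⊤}, F x ∂μ)
            + ∫⁻ x in ⋃ j, Bset j, F x ∂μ := lintegral_union_le _ _ _
      _ ≤ ((∫⁻ x in A ∩ h₁ ⁻¹' Set.Iic (0 : EReal), F x ∂μ)
            + ∫⁻ x in A ∩ h₁ ⁻¹' {⊤}, F x ∂μ) + ∑' j, ∫⁻ x in Bset j, F x ∂μ :=
          add_le_add (lintegral_union_le _ _ _) (lintegral_iUnion_le _ _)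
      _ = ∑' j, ∫⁻ x in Bset j, F x ∂μ := by rw [hS0, hStop]; simp
      _ ≤ ∑' j, (∫⁻ x in Bset j, ENNReal.ofReal (f₁ x) ∂μ
            + ENNReal.ofReal ε * ∫⁻ x in Bset j, ENNReal.ofReal (g₁ x) ∂μ) :=
          ENNReal.tsum_le_tsum hperslice
      _ = (∑' j, ∫⁻ x in Bset j, ENNReal.ofReal (f₁ x) ∂μ)
            + ENNReal.ofReal ε * ∑' j, ∫⁻ x in Bset j, ENNReal.ofReal (g₁ x) ∂μ := by
          rw [ENNReal.tsum_add, ENNReal.tsum_mul_left]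
      _ ≤ (∫⁻ x in A, ENNReal.ofReal (f₁ x) ∂μ) + ENNReal.ofReal ε * C := by
          gcongr
          · rw [← lintegral_iUnion hBm hBdisj]
            exact lintegral_mono_set (Set.iUnion_subset fun j => Set.inter_subset_left)
          · rw [← lintegral_iUnion hBm hBdisj, hCdef]
            exact setLIntegral_le_lintegral _ _
      _ ≤ (∫⁻ x in A, ENNReal.ofReal (f₁ x) ∂μ) + (δ : ENNReal) := add_le_add_right hεC _
  -- assembly
  have haef : ∀ᵐ x ∂μ, ENNReal.ofReal (f x) = ENNReal.ofReal (f₁ x) :=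
    hf₁ae.mono fun x hx => by rw [hx]
  constructor
  · intro A hAm hAinv
    calc ∫⁻ x in A,
          erealToENNReal
            (limsup (fun n => ((birkhoff T f n x / birkhoff T g n x : ℝ) : EReal)) atTop)
          * ENNReal.ofReal (g x) ∂μ
        = ∫⁻ x in A, F x ∂μ := lintegral_congr_ae (ae_restrict_of_ae haeF)
      _ ≤ ∫⁻ x in A, ENNReal.ofReal (f₁ x) ∂μ := main A hAm hAinv
      _ = ∫⁻ x in A, ENNReal.ofReal (f x) ∂μ :=
          (lintegral_congr_ae (ae_restrict_of_ae haef)).symm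
  · calc ∫⁻ x,
          erealToENNReal
            (limsup (fun n => ((birkhoff T f n x / birkhoff T g n x : ℝ) : EReal)) atTop)
          * ENNReal.ofReal (g x) ∂μ
        = ∫⁻ x, F x ∂μ := lintegral_congr_ae haeF
      _ = ∫⁻ x in Set.univ, F x ∂μ := (setLIntegral_univ _).symm
      _ ≤ ∫⁻ x in Set.univ, ENNReal.ofReal (f₁ x) ∂μ :=
          main Set.univ MeasurableSet.univ (by simp)
      _ = ∫⁻ x, ENNReal.ofReal (f₁ x) ∂μ := setLIntegral_univ _
      _ < ⊤ := by
          rw [← ofReal_integral_eq_lintegral_ofReal hf₁i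
            (Filter.Eventually.of_forall fun x => (hf₁pos x).le)]
          exact ENNReal.ofReal_lt_top
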